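/- For every δ ∈ (0, 1/2.4], the binary relative entropy satisfies kl(1−δ, δ) ≥ ln(1/(2.4δ)). -/

import Mathlib

open Real

/-- Secant (chord) lower bound for the concave function `log`. -/
lemma log_secant {a b t : ℝ} (ha : 0 < a) (hab : a < b) (h1 : a ≤ t) (h2 : t ≤ b) :
    (b - t) * Real.log a + (t - a) * Real.log b ≤ (b - a) * Real.log t := by
  have hb : 0 < b := ha.trans hab
  have hba : 0 < b - a := by linarith
  have hcc := strictConcaveOn_log_Ioi.concaveOn
  have h := hcc.2 (Set.mem_Ioi.2 ha) (Set.mem_Ioi.2 hb)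
    (div_nonneg (by linarith : (0:ℝ) ≤ b - t) hba.le)
    (div_nonneg (by linarith : (0:ℝ) ≤ t - a) hba.le)
    (by field_simp; ring)
  rw [smul_eq_mul, smul_eq_mul, smul_eq_mul, smul_eq_mul] at h
  have harg : (b - t) / (b - a) * a + (t - a) / (b - a) * b = t := by
    field_simp; ring
  rw [harg] at h
  have h' := mul_le_mul_of_nonneg_left h hba.le
  have key : (b - a) * ((b - t) / (b - a) * Real.log a + (t - a) / (b - a) * Real.log b)
      = (b - t) * Real.log a + (t - a) * Real.log b := by
    field_simp
  rw [key] at h'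
  linarith

lemma log3_bounds : (1.098612 : ℝ) ≤ Real.log 3 ∧ Real.log 3 ≤ 1.098613 := by
  have h := Real.abs_log_sub_add_sum_range_le (x := 1/4) (by rw [abs_of_nonneg] <;> norm_num) 16
  rw [show (1:ℝ) - 1/4 = 3/4 by norm_num, abs_le] at h
  have hlog : Real.log ((3:ℝ)/4) = Real.log 3 - 2 * Real.log 2 := by
    rw [Real.log_div (by norm_num) (by norm_num), show (4:ℝ) = 2^2 by norm_num, Real.log_pow]
    push_cast; ring
  rw [hlog] at h
  obtain ⟨h1, h2⟩ := h
  rw [abs_of_nonneg (by norm_num : (0:ℝ) ≤ 1/4)] at h1 h2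
  norm_num [Finset.sum_range_succ] at h1 h2
  constructor <;> nlinarith [Real.log_two_gt_d9, Real.log_two_lt_d9]

lemma log5_bounds : (1.609437 : ℝ) ≤ Real.log 5 ∧ Real.log 5 ≤ 1.609439 := by
  have h := Real.abs_log_sub_add_sum_range_le (x := -(1/4)) (by rw [abs_neg, abs_of_nonneg] <;> norm_num) 16
  rw [show (1:ℝ) - -(1/4) = 5/4 by norm_num, abs_le] at h
  have hlog : Real.log ((5:ℝ)/4) = Real.log 5 - 2 * Real.log 2 := by
    rw [Real.log_div (by norm_num) (by norm_num), show (4:ℝ) = 2^2 by norm_num, Real.log_pow]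
    push_cast; ring
  rw [hlog] at h
  obtain ⟨h1, h2⟩ := h
  rw [show |-(1/4 : ℝ)| = 1/4 by rw [abs_neg, abs_of_nonneg] <;> norm_num] at h1 h2
  norm_num [Finset.sum_range_succ] at h1 h2
  constructor <;> nlinarith [Real.log_two_gt_d9, Real.log_two_lt_d9]

lemma log7_bounds : (1.945910 : ℝ) ≤ Real.log 7 ∧ Real.log 7 ≤ 1.945911 := by
  have h := Real.abs_log_sub_add_sum_range_le (x := 1/8) (by rw [abs_of_nonneg] <;> norm_num) 10
  rw [show (1:ℝ) - 1/8 = 7/8 by norm_num, abs_le] at h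
  have hlog : Real.log ((7:ℝ)/8) = Real.log 7 - 3 * Real.log 2 := by
    rw [Real.log_div (by norm_num) (by norm_num), show (8:ℝ) = 2^3 by norm_num, Real.log_pow]
    push_cast; ring
  rw [hlog] at h
  obtain ⟨h1, h2⟩ := h
  rw [abs_of_nonneg (by norm_num : (0:ℝ) ≤ 1/8)] at h1 h2
  norm_num [Finset.sum_range_succ] at h1 h2
  constructor <;> nlinarith [Real.log_two_gt_d9, Real.log_two_lt_d9]

/-- One interval step: if `δ ∈ [a,b]` and we have rational lower bounds on the
logs at the endpoints, then nonnegativity of the secant quadratic gives the claim. -/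
lemma interval_step (a b la lb2 l1a l1b L δ : ℝ)
    (ha : 0 < a) (hab : a < b) (hb : b ≤ 5/12)
    (hla : la ≤ Real.log a) (hlb : lb2 ≤ Real.log b)
    (h1a : l1a ≤ Real.log (1-a)) (h1b : l1b ≤ Real.log (1-b))
    (hL : L ≤ Real.log (12/5))
    (hd1 : a ≤ δ) (hd2 : δ ≤ b)
    (key : 0 ≤ (1-2*δ)*((δ-a)*l1b + (b-δ)*l1a) + 2*δ*((b-δ)*la + (δ-a)*lb2) + (b-a)*L) :
    0 ≤ (1-2*δ)*Real.log (1-δ) + 2*δ*Real.log δ + Real.log (12/5) := by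
  have hbpos : 0 < b := ha.trans hab
  have h1bpos : 0 < 1 - b := by linarith
  have hba : 0 < b - a := by linarith
  have S1 : (b-δ)*Real.log a + (δ-a)*Real.log b ≤ (b-a)*Real.log δ :=
    log_secant ha hab hd1 hd2
  have S2' : ((1-a)-(1-δ))*Real.log (1-b) + ((1-δ)-(1-b))*Real.log (1-a)
      ≤ ((1-a)-(1-b))*Real.log (1-δ) :=
    log_secant h1bpos (by linarith) (by linarith) (by linarith)
  have S2 : (δ-a)*Real.log (1-b) + (b-δ)*Real.log (1-a) ≤ (b-a)*Real.log (1-δ) := by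
    have e1 : (1-a)-(1-δ) = δ - a := by ring
    have e2 : (1-δ)-(1-b) = b - δ := by ring
    have e3 : (1-a)-(1-b) = b - a := by ring
    rw [e1, e2, e3] at S2'
    exact S2'
  have T1 : (b-δ)*la + (δ-a)*lb2 ≤ (b-a)*Real.log δ :=
    le_trans (add_le_add (mul_le_mul_of_nonneg_left hla (by linarith))
      (mul_le_mul_of_nonneg_left hlb (by linarith))) S1
  have T2 : (δ-a)*l1b + (b-δ)*l1a ≤ (b-a)*Real.log (1-δ) :=
    le_trans (add_le_add (mul_le_mul_of_nonneg_left h1b (by linarith))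
      (mul_le_mul_of_nonneg_left h1a (by linarith))) S2
  have T3 : (b-a)*L ≤ (b-a)*Real.log (12/5) := mul_le_mul_of_nonneg_left hL hba.le
  have U1 : 2*δ*((b-δ)*la + (δ-a)*lb2) ≤ 2*δ*((b-a)*Real.log δ) :=
    mul_le_mul_of_nonneg_left T1 (by linarith)
  have U2 : (1-2*δ)*((δ-a)*l1b + (b-δ)*l1a) ≤ (1-2*δ)*((b-a)*Real.log (1-δ)) :=
    mul_le_mul_of_nonneg_left T2 (by linarith)
  have V : 0 ≤ (b-a)*((1-2*δ)*Real.log (1-δ) + 2*δ*Real.log δ + Real.log (12/5)) := by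
    nlinarith [key, U1, U2, T3]
  nlinarith [V, hba]

lemma small_case (δ : ℝ) (h0 : 0 < δ) (h25 : δ ≤ 1/25)
    (hC : (0.875463 : ℝ) ≤ Real.log (12/5)) :
    0 ≤ (1-2*δ)*Real.log (1-δ) + 2*δ*Real.log δ + Real.log (12/5) := by
  have h1δ : 0 < 1 - δ := by linarith
  have t1 := Real.log_le_sub_one_of_pos (inv_pos.2 h1δ)
  rw [Real.log_inv] at t1
  have hinv : (1-δ) * (1-δ)⁻¹ = 1 := mul_inv_cancel₀ (ne_of_gt h1δ)
  have hY : -δ ≤ (1-δ) * Real.log (1-δ) := by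
    nlinarith [mul_le_mul_of_nonneg_left t1 h1δ.le]
  have hYneg : Real.log (1-δ) ≤ 0 := Real.log_nonpos (by linarith) (by linarith)
  have hsp : 0 < Real.sqrt δ := Real.sqrt_pos.2 h0
  have hss : Real.sqrt δ * Real.sqrt δ = δ := Real.mul_self_sqrt h0.le
  have hs5 : Real.sqrt δ ≤ 1/5 := by
    rw [show (1/5:ℝ) = Real.sqrt (1/25) by
      rw [show (1/25:ℝ) = (1/5)^2 by norm_num, Real.sqrt_sq (by norm_num)]]
    exact Real.sqrt_le_sqrt h25
  have t2 := Real.log_le_sub_one_of_pos (inv_pos.2 hsp)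
  rw [Real.log_inv, Real.log_sqrt h0.le] at t2
  have hsinv : Real.sqrt δ * (Real.sqrt δ)⁻¹ = 1 := mul_inv_cancel₀ (ne_of_gt hsp)
  have hX : 2*Real.sqrt δ - 2 ≤ Real.sqrt δ * Real.log δ := by
    nlinarith [mul_le_mul_of_nonneg_left t2 hsp.le, hsinv]
  have e : 2*δ*Real.log δ = 2*Real.sqrt δ*(Real.sqrt δ*Real.log δ) := by
    linear_combination (-2*Real.log δ) * hss
  have hXX : 4*δ - 4/5 ≤ 2*δ*Real.log δ := by
    rw [e]
    nlinarith [mul_le_mul_of_nonneg_left hX (by linarith : (0:ℝ) ≤ 2*Real.sqrt δ), hss, hs5]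
  nlinarith [hY, hXX, hC, mul_nonpos_of_nonneg_of_nonpos h0.le hYneg]

set_option maxHeartbeats 4000000 in
lemma main_ineq (δ : ℝ) (h0 : 0 < δ) (h512 : δ ≤ 5/12)
    (l2a : (0.6931471 : ℝ) ≤ Real.log 2) (l2b : Real.log 2 ≤ 0.6931472)
    (l3a : (1.098612 : ℝ) ≤ Real.log 3) (l3b : Real.log 3 ≤ 1.098613)
    (l5a : (1.609437 : ℝ) ≤ Real.log 5) (l5b : Real.log 5 ≤ 1.609439)
    (l7a : (1.945910 : ℝ) ≤ Real.log 7) (l7b : Real.log 7 ≤ 1.945911) :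
    0 ≤ (1-2*δ)*Real.log (1-δ) + 2*δ*Real.log δ + Real.log (12/5) := by
  -- express logs of the needed rationals through primes
  have e125 : Real.log ((1:ℝ)/25) = -(2*Real.log 5) := by
    rw [one_div, Real.log_inv, show (25:ℝ) = 5^2 by norm_num, Real.log_pow]; push_cast; ring
  have e2425 : Real.log ((24:ℝ)/25) = 3*Real.log 2 + Real.log 3 - 2*Real.log 5 := by
    rw [Real.log_div (by norm_num) (by norm_num), show (24:ℝ) = 2^3*3 by norm_num,
      Real.log_mul (by norm_num) (by norm_num), Real.log_pow,
      show (25:ℝ) = 5^2 by norm_num, Real.log_pow]; push_cast; ring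
  have e18 : Real.log ((1:ℝ)/8) = -(3*Real.log 2) := by
    rw [one_div, Real.log_inv, show (8:ℝ) = 2^3 by norm_num, Real.log_pow]; push_cast; ring
  have e78 : Real.log ((7:ℝ)/8) = Real.log 7 - 3*Real.log 2 := by
    rw [Real.log_div (by norm_num) (by norm_num), show (8:ℝ) = 2^3 by norm_num, Real.log_pow]
    push_cast; ring
  have e15 : Real.log ((1:ℝ)/5) = -Real.log 5 := by
    rw [one_div, Real.log_inv]
  have e45 : Real.log ((4:ℝ)/5) = 2*Real.log 2 - Real.log 5 := by
    rw [Real.log_div (by norm_num) (by norm_num), show (4:ℝ) = 2^2 by norm_num, Real.log_pow]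
    push_cast; ring
  have e14 : Real.log ((1:ℝ)/4) = -(2*Real.log 2) := by
    rw [one_div, Real.log_inv, show (4:ℝ) = 2^2 by norm_num, Real.log_pow]; push_cast; ring
  have e34 : Real.log ((3:ℝ)/4) = Real.log 3 - 2*Real.log 2 := by
    rw [Real.log_div (by norm_num) (by norm_num), show (4:ℝ) = 2^2 by norm_num, Real.log_pow]
    push_cast; ring
  have e310 : Real.log ((3:ℝ)/10) = Real.log 3 - Real.log 2 - Real.log 5 := by
    rw [Real.log_div (by norm_num) (by norm_num), show (10:ℝ) = 2*5 by norm_num,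
      Real.log_mul (by norm_num) (by norm_num)]; ring
  have e710 : Real.log ((7:ℝ)/10) = Real.log 7 - Real.log 2 - Real.log 5 := by
    rw [Real.log_div (by norm_num) (by norm_num), show (10:ℝ) = 2*5 by norm_num,
      Real.log_mul (by norm_num) (by norm_num)]; ring
  have e13 : Real.log ((1:ℝ)/3) = -Real.log 3 := by rw [one_div, Real.log_inv]
  have e23 : Real.log ((2:ℝ)/3) = Real.log 2 - Real.log 3 :=
    Real.log_div (by norm_num) (by norm_num)
  have e925 : Real.log ((9:ℝ)/25) = 2*Real.log 3 - 2*Real.log 5 := by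
    rw [Real.log_div (by norm_num) (by norm_num), show (9:ℝ) = 3^2 by norm_num,
      show (25:ℝ) = 5^2 by norm_num, Real.log_pow, Real.log_pow]; push_cast; ring
  have e1625 : Real.log ((16:ℝ)/25) = 4*Real.log 2 - 2*Real.log 5 := by
    rw [Real.log_div (by norm_num) (by norm_num), show (16:ℝ) = 2^4 by norm_num,
      show (25:ℝ) = 5^2 by norm_num, Real.log_pow, Real.log_pow]; push_cast; ring
  have e512 : Real.log ((5:ℝ)/12) = Real.log 5 - 2*Real.log 2 - Real.log 3 := by
    rw [Real.log_div (by norm_num) (by norm_num), show (12:ℝ) = 2^2*3 by norm_num,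
      Real.log_mul (by norm_num) (by norm_num), Real.log_pow]; push_cast; ring
  have e712 : Real.log ((7:ℝ)/12) = Real.log 7 - 2*Real.log 2 - Real.log 3 := by
    rw [Real.log_div (by norm_num) (by norm_num), show (12:ℝ) = 2^2*3 by norm_num,
      Real.log_mul (by norm_num) (by norm_num), Real.log_pow]; push_cast; ring
  have e125' : Real.log ((12:ℝ)/5) = 2*Real.log 2 + Real.log 3 - Real.log 5 := by
    rw [Real.log_div (by norm_num) (by norm_num), show (12:ℝ) = 2^2*3 by norm_num,
      Real.log_mul (by norm_num) (by norm_num), Real.log_pow]; push_cast; ring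
  have hL : (0.875463 : ℝ) ≤ Real.log (12/5) := by rw [e125']; linarith
  rcases le_or_gt δ (1/25) with h | h
  · exact small_case δ h0 h hL
  rcases le_or_gt δ (1/8) with hcut0 | hcut0
  · exact interval_step (1/25) (1/8) ((-3218881/1000000 : ℝ)) ((-2079447/1000000 : ℝ)) ((-40827/1000000 : ℝ)) ((-133537/1000000 : ℝ)) (0.875463) δ
      (by norm_num) (by norm_num) (by norm_num)
      (by rw [e125]; linarith) (by rw [e18]; linarith)
      (by rw [show (1:ℝ) - 1/25 = 24/25 by norm_num, e2425]; linarith)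
      (by rw [show (1:ℝ) - 1/8 = 7/8 by norm_num, e78]; linarith)
      hL (by linarith) (by linarith)
      (by nlinarith [sq_nonneg (δ - (7315507/49285760 : ℝ))])
  rcases le_or_gt δ (1/5) with hcut1 | hcut1
  · exact interval_step (1/8) (1/5) ((-2079447/1000000 : ℝ)) ((-1609443/1000000 : ℝ)) ((-133537/1000000 : ℝ)) ((-223149/1000000 : ℝ)) (0.875463) δ
      (by norm_num) (by norm_num) (by norm_num)
      (by rw [e18]; linarith) (by rw [e15]; linarith)
      (by rw [show (1:ℝ) - 1/8 = 7/8 by norm_num, e78]; linarith)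
      (by rw [show (1:ℝ) - 1/5 = 4/5 by norm_num, e45]; linarith)
      hL (by linarith) (by linarith)
      (by nlinarith [sq_nonneg (δ - (1042805/4476928 : ℝ))])
  rcases le_or_gt δ (1/4) with hcut2 | hcut2
  · exact interval_step (1/5) (1/4) ((-1609443/1000000 : ℝ)) ((-13863/10000 : ℝ)) ((-223149/1000000 : ℝ)) ((-35961/125000 : ℝ)) (0.875463) δ
      (by norm_num) (by norm_num) (by norm_num)
      (by rw [e15]; linarith) (by rw [e14]; linarith)
      (by rw [show (1:ℝ) - 1/5 = 4/5 by norm_num, e45]; linarith)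
      (by rw [show (1:ℝ) - 1/4 = 3/4 by norm_num, e34]; linarith)
      hL (by linarith) (by linarith)
      (by nlinarith [sq_nonneg (δ - (265201/958940 : ℝ))])
  rcases le_or_gt δ (3/10) with hcut3 | hcut3
  · exact interval_step (1/4) (3/10) ((-13863/10000 : ℝ)) ((-601989/500000 : ℝ)) ((-35961/125000 : ℝ)) ((-8917/25000 : ℝ)) (0.875463) δ
      (by norm_num) (by norm_num) (by norm_num)
      (by rw [e14]; linarith) (by rw [e310]; linarith)
      (by rw [show (1:ℝ) - 1/4 = 3/4 by norm_num, e34]; linarith)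
      (by rw [show (1:ℝ) - 3/10 = 7/10 by norm_num, e710]; linarith)
      hL (by linarith) (by linarith)
      (by nlinarith [sq_nonneg (δ - (1522551/5026280 : ℝ))])
  rcases le_or_gt δ (1/3) with hcut4 | hcut4
  · exact interval_step (3/10) (1/3) ((-601989/500000 : ℝ)) ((-549309/500000 : ℝ)) ((-8917/25000 : ℝ)) ((-405471/1000000 : ℝ)) (0.875463) δ
      (by norm_num) (by norm_num) (by norm_num)
      (by rw [e310]; linarith) (by rw [e13]; linarith)
      (by rw [show (1:ℝ) - 3/10 = 7/10 by norm_num, e710]; linarith)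
      (by rw [show (1:ℝ) - 1/3 = 2/3 by norm_num, e23]; linarith)
      hL (by linarith) (by linarith)
      (by nlinarith [sq_nonneg (δ - (1483261/4624530 : ℝ))])
  rcases le_or_gt δ (9/25) with hcut5 | hcut5
  · exact interval_step (1/3) (9/25) ((-549309/500000 : ℝ)) ((-1021657/1000000 : ℝ)) ((-405471/1000000 : ℝ)) ((-446293/1000000 : ℝ)) (0.875463) δ
      (by norm_num) (by norm_num) (by norm_num)
      (by rw [e13]; linarith) (by rw [e925]; linarith)
      (by rw [show (1:ℝ) - 1/3 = 2/3 by norm_num, e23]; linarith)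
      (by rw [show (1:ℝ) - 9/25 = 16/25 by norm_num, e1625]; linarith)
      hL (by linarith) (by linarith)
      (by nlinarith [sq_nonneg (δ - (976949/2944575 : ℝ))])
  · exact interval_step (9/25) (5/12) ((-1021657/1000000 : ℝ)) ((-437737/500000 : ℝ)) ((-446293/1000000 : ℝ)) ((-269501/500000 : ℝ)) (0.875463) δ
      (by norm_num) (by norm_num) (by norm_num)
      (by rw [e925]; linarith) (by rw [e512]; linarith)
      (by rw [show (1:ℝ) - 9/25 = 16/25 by norm_num, e1625]; linarith)
      (by rw [show (1:ℝ) - 5/12 = 7/12 by norm_num, e712]; linarith)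
      hL (by linarith) (by linarith)
      (by nlinarith [sq_nonneg (δ - (8247979/23889200 : ℝ))])

/-- For `δ ∈ (0, 1/2.4]`, the binary relative entropy satisfies
`kl(1−δ, δ) ≥ ln(1/(2.4 δ))`, where
`kl(x,y) = x ln(x/y) + (1−x) ln((1−x)/(1−y))`. -/
theorem kl_one_sub_ge (δ : ℝ) (hδ : δ ∈ Set.Ioc (0 : ℝ) (1 / 2.4)) :
    (1 - δ) * Real.log ((1 - δ) / δ) + (1 - (1 - δ)) * Real.log ((1 - (1 - δ)) / (1 - δ)) ≥
      Real.log (1 / (2.4 * δ)) := by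
  obtain ⟨h0, h1⟩ := hδ
  have h512 : δ ≤ 5/12 := by
    rw [show (1/2.4 : ℝ) = 5/12 by norm_num] at h1; exact h1
  have h1δ : 0 < 1 - δ := by linarith
  have hlog1 : Real.log ((1-δ)/δ) = Real.log (1-δ) - Real.log δ :=
    Real.log_div (by linarith) (ne_of_gt h0)
  have hlog2 : Real.log ((1-(1-δ))/(1-δ)) = Real.log δ - Real.log (1-δ) := by
    rw [show (1:ℝ)-(1-δ) = δ by ring]
    exact Real.log_div (ne_of_gt h0) (by linarith)
  have hlog3 : Real.log (1/(2.4*δ)) = -(Real.log (12/5) + Real.log δ) := by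
    rw [one_div, Real.log_inv, show (2.4:ℝ) = 12/5 by norm_num,
      Real.log_mul (by norm_num) (ne_of_gt h0)]
  have main := main_ineq δ h0 h512
    (by linarith [Real.log_two_gt_d9]) (by linarith [Real.log_two_lt_d9])
    log3_bounds.1 log3_bounds.2 log5_bounds.1 log5_bounds.2 log7_bounds.1 log7_bounds.2
  rw [hlog1, hlog2, hlog3, show (1:ℝ)-(1-δ) = δ by ring]
  nlinarith [main]
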